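/- Let E(t) be the unique formal power series solution in R[[t_0, t_1, ...]] with zero constant term of the genus-zero Euler–Lagrange equation B_t(E(t)) = 0, i.e. E(t) = Σ_{i≥0} (t_i/i!) E(t)^i. Then E(t) = Σ_{n≥1} (1/n) Σ_{i_1+...+i_n = n−1} (t_{i_1}/i_1!) ··· (t_{i_n}/i_n!). -/

import Mathlib

open MvPowerSeries Finsupp
namespace ESeriesAux
abbrev sz (d : ℕ →₀ ℕ) : ℕ := d.sum fun _ m => m
abbrev wt (d : ℕ →₀ ℕ) : ℕ := d.sum fun i m => i * m
abbrev pr (d : ℕ →₀ ℕ) : ℕ := d.prod fun i m => m.factorial * i.factorial ^ m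

noncomputable def cc (k : ℕ) (d : ℕ →₀ ℕ) : ℚ :=
  if wt d + k = sz d then (k : ℚ) * ((sz d - 1).factorial : ℚ) / ((pr d : ℕ) : ℚ) else 0

lemma sz_pos (d : ℕ →₀ ℕ) (h : d ≠ 0) : 1 ≤ sz d := by
  rw [Nat.one_le_iff_ne_zero]
  intro h0
  apply h
  rw [sz, Finsupp.sum, Finset.sum_eq_zero_iff] at h0
  ext a
  by_cases ha : a ∈ d.support
  · exact h0 a ha
  · simpa using Finsupp.notMem_support_iff.mp ha

lemma sz_add (d1 d2 : ℕ →₀ ℕ) : sz (d1 + d2) = sz d1 + sz d2 :=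
  Finsupp.sum_add_index' (fun _ => rfl) (fun _ _ _ => rfl)

lemma wt_add (d1 d2 : ℕ →₀ ℕ) : wt (d1 + d2) = wt d1 + wt d2 :=
  Finsupp.sum_add_index' (fun i => by simp) (fun i a b => Nat.mul_add i a b)

lemma sz_single (i n : ℕ) : sz (Finsupp.single i n) = n := by
  simp [sz, Finsupp.sum_single_index]

lemma wt_single (i n : ℕ) : wt (Finsupp.single i n) = i * n := by
  simp [wt]

lemma sz_sub (i : ℕ) (d : ℕ →₀ ℕ) (h : Finsupp.single i 1 ≤ d) :
    sz (d - Finsupp.single i 1) + 1 = sz d := by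
  conv_rhs => rw [← tsub_add_cancel_of_le h]
  rw [sz_add, sz_single]

lemma wt_sub (i : ℕ) (d : ℕ →₀ ℕ) (h : Finsupp.single i 1 ≤ d) :
    wt (d - Finsupp.single i 1) + i = wt d := by
  conv_rhs => rw [← tsub_add_cancel_of_le h]
  rw [wt_add, wt_single, mul_one]

lemma pr_pos (d : ℕ →₀ ℕ) : 0 < pr d := by
  apply Finset.prod_pos
  intro i _
  positivity

lemma erase_sub_single (i : ℕ) (d : ℕ →₀ ℕ) :
    (d - Finsupp.single i 1).erase i = d.erase i := by
  ext j
  rcases eq_or_ne j i with rfl | hj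
  · simp
  · simp [Finsupp.erase_apply, hj, Finsupp.tsub_apply, Finsupp.single_apply, Ne.symm hj]

lemma pr_sub (i : ℕ) (d : ℕ →₀ ℕ) (h : i ∈ d.support) :
    pr d = d i * i.factorial * pr (d - Finsupp.single i 1) := by
  have h0 : ∀ j : ℕ, (fun (j : ℕ) (m : ℕ) => m.factorial * j.factorial ^ m) j 0 = 1 := by
    intro j; simp
  rw [pr, ← Finsupp.mul_prod_erase' d i _ h0]
  rw [pr, ← Finsupp.mul_prod_erase' (d - Finsupp.single i 1) i _ h0]
  rw [erase_sub_single]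
  have hdi : ((d - Finsupp.single i 1) : ℕ →₀ ℕ) i = d i - 1 := by
    rw [Finsupp.tsub_apply, Finsupp.single_eq_same]
  rw [hdi]
  have hne : d i ≠ 0 := Finsupp.mem_support_iff.mp h
  obtain ⟨c, hc⟩ := Nat.exists_eq_succ_of_ne_zero hne
  rw [hc]
  simp only [Nat.succ_sub_one, Nat.factorial_succ, pow_succ, Nat.succ_eq_add_one]
  ring

lemma key_arith (ki di F fi P' : ℚ) (hdi : di ≠ 0) (hfi : fi ≠ 0) (hP' : P' ≠ 0) :
    fi⁻¹ * (ki * F / P') = (ki * di) * (F / (di * fi * P')) := by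
  field_simp

lemma sum_support_eq_sz (d : ℕ →₀ ℕ) : ∑ i ∈ d.support, d i = sz d := rfl
lemma sum_support_eq_wt (d : ℕ →₀ ℕ) : ∑ i ∈ d.support, i * d i = wt d := rfl

lemma supp_zero_wt (d : ℕ →₀ ℕ) (h : wt d = 0) (h1 : sz d = 1) : d = Finsupp.single 0 1 := by
  have hsupp : ∀ i ∈ d.support, i = 0 := by
    intro i hi
    rw [wt, Finsupp.sum, Finset.sum_eq_zero_iff] at h
    have h2 := h i hi
    have h3 := Finsupp.mem_support_iff.mp hi
    rcases Nat.mul_eq_zero.mp h2 with h4 | h4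
    · exact h4
    · exact absurd h4 h3
  have hd : d = Finsupp.single 0 (d 0) := by
    ext a
    rcases eq_or_ne a 0 with rfl | ha
    · simp
    · rw [Finsupp.single_apply, if_neg (Ne.symm ha)]
      by_cases has : a ∈ d.support
      · exact absurd (hsupp a has) ha
      · exact Finsupp.notMem_support_iff.mp has
  have h5 : sz (Finsupp.single 0 (d 0)) = d 0 := by simp [sz]
  rw [hd] at h1 ⊢
  rw [h5] at h1
  rw [h1]

section
variable (E : MvPowerSeries ℕ ℚ)
    (hE0 : MvPowerSeries.constantCoeff E = 0)
    (hEeq : ∀ d : ℕ →₀ ℕ,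
      MvPowerSeries.coeff d E =
        ∑ i ∈ Finset.range ((d.sum fun _ m => m) + 1),
          (i.factorial : ℚ)⁻¹ * MvPowerSeries.coeff d (MvPowerSeries.X i * E ^ i))

include hE0 in
lemma vanish : ∀ k d, sz d < k → MvPowerSeries.coeff d (E ^ k) = 0 := by
  intro k
  induction k with
  | zero => intro d h; omega
  | succ k ih =>
    intro d h
    rw [pow_succ, MvPowerSeries.coeff_mul]
    apply Finset.sum_eq_zero
    intro p hp
    rw [Finset.HasAntidiagonal.mem_antidiagonal] at hp
    by_cases h2 : p.2 = 0
    · have hc : MvPowerSeries.coeff p.2 E = 0 := by rw [h2]; exact hE0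
      rw [hc, mul_zero]
    · have h1 : sz p.1 < k := by
        have := sz_pos p.2 h2
        have hs : sz p.1 + sz p.2 = sz d := by rw [← sz_add, hp]
        omega
      rw [ih p.1 h1, zero_mul]

include hE0 hEeq in
lemma formA (d : ℕ →₀ ℕ) (s : Finset ℕ) (hs : d.support ⊆ s) :
    MvPowerSeries.coeff d E =
      ∑ i ∈ s, (i.factorial : ℚ)⁻¹ * MvPowerSeries.coeff d (MvPowerSeries.X i * E ^ i) := by
  have hzero : ∀ i, i ∉ d.support →
      (i.factorial : ℚ)⁻¹ * MvPowerSeries.coeff d (MvPowerSeries.X i * E ^ i) = 0 := by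
    intro i hi
    rw [MvPowerSeries.X_def, MvPowerSeries.coeff_monomial_mul, if_neg, mul_zero]
    intro hle
    exact hi (Finsupp.mem_support_iff.mpr (by
      have := Finsupp.single_le_iff.mp hle
      omega))
  have hbig : ∀ i, sz d < i →
      (i.factorial : ℚ)⁻¹ * MvPowerSeries.coeff d (MvPowerSeries.X i * E ^ i) = 0 := by
    intro i hi
    rw [MvPowerSeries.X_def, MvPowerSeries.coeff_monomial_mul]
    split_ifs with hle
    · rw [one_mul, vanish E hE0 i _ ?_, mul_zero]
      have := sz_sub i d hle
      omega
    · rw [mul_zero]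
  rw [hEeq d]
  have e1 := Finset.sum_subset
    (Finset.subset_union_left (s₁ := Finset.range (sz d + 1)) (s₂ := s))
    (f := fun i => (i.factorial : ℚ)⁻¹ * MvPowerSeries.coeff d (MvPowerSeries.X i * E ^ i))
    (fun i _ hR => hbig i (by simpa using hR))
  have e2 := Finset.sum_subset
    (Finset.subset_union_right (s₁ := Finset.range (sz d + 1)) (s₂ := s))
    (f := fun i => (i.factorial : ℚ)⁻¹ * MvPowerSeries.coeff d (MvPowerSeries.X i * E ^ i))
    (fun i _ hn => hzero i (fun hmem => hn (hs hmem)))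
  rw [show (d.sum fun _ m => m) = sz d from rfl, e1, e2]

include hE0 hEeq in
lemma recur (d : ℕ →₀ ℕ) (k : ℕ) :
    MvPowerSeries.coeff d (E ^ (k + 1)) =
      ∑ i ∈ d.support,
        (i.factorial : ℚ)⁻¹ * MvPowerSeries.coeff d (MvPowerSeries.X i * E ^ (k + i)) := by
  rw [pow_succ, MvPowerSeries.coeff_mul]
  have step : ∀ p ∈ Finset.HasAntidiagonal.antidiagonal d,
      MvPowerSeries.coeff p.1 (E ^ k) * MvPowerSeries.coeff p.2 E =
        ∑ i ∈ d.support, (i.factorial : ℚ)⁻¹ *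
          (MvPowerSeries.coeff p.1 (E ^ k) *
            MvPowerSeries.coeff p.2 (MvPowerSeries.X i * E ^ i)) := by
    intro p hp
    rw [Finset.HasAntidiagonal.mem_antidiagonal] at hp
    have hle : p.2 ≤ d := le_of_add_le_right (le_of_eq hp)
    rw [formA E hE0 hEeq p.2 d.support
      ((Finsupp.support_mono hle : p.2.support ⊆ d.support)), Finset.mul_sum]
    apply Finset.sum_congr rfl
    intro i _
    ring
  rw [Finset.sum_congr rfl step, Finset.sum_comm]
  apply Finset.sum_congr rfl
  intro i _
  rw [← Finset.mul_sum]
  congr 1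
  rw [← MvPowerSeries.coeff_mul]
  congr 1
  rw [pow_add]
  ring

include hE0 hEeq in
lemma main : ∀ n d, sz d = n → ∀ k : ℕ, MvPowerSeries.coeff d (E ^ (k + 1)) = cc (k + 1) d := by
  intro n
  induction n using Nat.strong_induction_on with
  | _ n ih =>
  intro d hd k
  by_cases hd0 : d = 0
  · subst hd0
    rw [vanish E hE0 (k+1) 0 (by simp [sz])]
    rw [cc, if_neg (by simp [sz, wt])]
  -- d ≠ 0
  have hn1 : 1 ≤ n := hd ▸ sz_pos d hd0
  rw [recur E hE0 hEeq d k]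
  -- rewrite each term using coeff_X_mul and guard true
  have hguard : ∀ i ∈ d.support, Finsupp.single i 1 ≤ d := by
    intro i hi
    rw [Finsupp.single_le_iff]
    have := Finsupp.mem_support_iff.mp hi
    omega
  have hsub : ∀ i ∈ d.support,
      MvPowerSeries.coeff d (MvPowerSeries.X i * E ^ (k + i)) =
        MvPowerSeries.coeff (d - Finsupp.single i 1) (E ^ (k + i)) := by
    intro i hi
    rw [MvPowerSeries.X_def, MvPowerSeries.coeff_monomial_mul, if_pos (hguard i hi), one_mul]
  by_cases hC : wt d + (k + 1) = sz d
  · -- main case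
    by_cases hmk : wt d = 0 ∧ k = 0
    · obtain ⟨hm, hk⟩ := hmk
      have hn : sz d = 1 := by omega
      have hde : d = Finsupp.single 0 1 := supp_zero_wt d hm hn
      subst hde hk
      rw [Finsupp.support_single_ne_zero 0 one_ne_zero]
      rw [Finset.sum_singleton]
      rw [hsub 0 (by simp), ]
      simp only [Nat.factorial_zero, Nat.cast_one, inv_one, one_mul, add_zero, pow_zero]
      rw [tsub_self, MvPowerSeries.coeff_zero_eq_constantCoeff, map_one]
      rw [cc, if_pos (by rw [wt_single, sz_single]), sz_single]
      have hpr : pr (Finsupp.single 0 1) = 1 := by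
        rw [pr, Finsupp.prod_single_index (by simp)]
        simp
      rw [hpr]
      norm_num
    -- n ≥ 2 case: wt d + k ≥ 1
    have hmk1 : 1 ≤ wt d + k := by
      rcases Nat.eq_zero_or_pos (wt d) with h | h
      · rcases Nat.eq_zero_or_pos k with h' | h'
        · exact absurd ⟨h, h'⟩ hmk
        · omega
      · omega
    set m := wt d with hm
    have hterm : ∀ i ∈ d.support,
        (i.factorial : ℚ)⁻¹ * MvPowerSeries.coeff d (MvPowerSeries.X i * E ^ (k + i)) =
          (((k + i) * d i : ℕ) : ℚ) * (((m + k - 1).factorial : ℚ) / ((pr d : ℕ) : ℚ)) := by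
      intro i hi
      rw [hsub i hi]
      set d' := d - Finsupp.single i 1 with hd'
      have hszd' : sz d' + 1 = sz d := sz_sub i d (hguard i hi)
      have hwtd' : wt d' + i = wt d := wt_sub i d (hguard i hi)
      have hprd : pr d = d i * i.factorial * pr d' := pr_sub i d hi
      rcases Nat.eq_zero_or_pos (k + i) with hki | hki
      · -- k = 0, i = 0 : E^0 = 1
        have hk0 : k = 0 := by omega
        have hi0 : i = 0 := by omega
        subst hk0; subst hi0
        rw [pow_zero]
        have hd'ne : d' ≠ 0 := by
          intro h0
          have h1 := tsub_add_cancel_of_le (hguard 0 hi)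
          rw [← hd', h0, zero_add] at h1
          rw [← h1, wt_single] at hm
          simp at hm
          omega
        rw [MvPowerSeries.coeff_one, if_neg hd'ne]
        simp
      · -- k + i ≥ 1
        obtain ⟨j, hj⟩ : ∃ j, k + i = j + 1 := ⟨k + i - 1, by omega⟩
        rw [hj, ih (sz d') (by omega) d' rfl j, ← hj]
        rw [cc]
        rw [if_pos (by omega)]
        have hsz2 : sz d' - 1 = m + k - 1 := by omega
        rw [hsz2]
        have hdine : (d i : ℚ) ≠ 0 := by
          have := Finsupp.mem_support_iff.mp hi
          exact_mod_cast this
        have hifac : ((i.factorial : ℕ) : ℚ) ≠ 0 := by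
          exact_mod_cast i.factorial_ne_zero
        have hprd' : ((pr d' : ℕ) : ℚ) ≠ 0 := by
          have := pr_pos d'
          positivity
        rw [hprd, Nat.cast_mul, Nat.cast_mul, Nat.cast_mul]
        exact key_arith _ _ _ _ _ hdine hifac hprd'
    rw [Finset.sum_congr rfl hterm, ← Finset.sum_mul]
    rw [← Nat.cast_sum]
    have hsum : ∑ i ∈ d.support, (k + i) * d i = k * sz d + m := by
      rw [hm, ← sum_support_eq_wt, ← sum_support_eq_sz, Finset.mul_sum, ← Finset.sum_add_distrib]
      exact Finset.sum_congr rfl (fun i _ => by ring)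
    rw [hsum, cc, if_pos hC]
    have hn2 : sz d = m + k + 1 := by omega
    rw [hn2]
    have : (m + k + 1) - 1 = m + k := by omega
    rw [this]
    have hfac : (m + k).factorial = (m + k) * (m + k - 1).factorial := by
      rw [← Nat.mul_factorial_pred (by omega)]
    have hknm : k * (m + k + 1) + m = (k + 1) * (m + k) := by ring
    rw [hknm, hfac]
    push_cast
    ring
  · -- condition fails : everything is 0
    rw [cc, if_neg hC]
    apply Finset.sum_eq_zero
    intro i hi
    rw [hsub i hi]
    set d' := d - Finsupp.single i 1 with hd'
    have hszd' : sz d' + 1 = sz d := sz_sub i d (hguard i hi)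
    have hwtd' : wt d' + i = wt d := wt_sub i d (hguard i hi)
    rcases Nat.eq_zero_or_pos (k + i) with hki | hki
    · have hk0 : k = 0 := by omega
      have hi0 : i = 0 := by omega
      subst hk0; subst hi0
      rw [pow_zero]
      have hd'ne : d' ≠ 0 := by
        intro h0
        apply hC
        have hde : d = Finsupp.single 0 1 := by
          have h1 := tsub_add_cancel_of_le (hguard 0 hi)
          rw [← hd', h0, zero_add] at h1
          exact h1.symm
        rw [hde, wt_single, sz_single]
      rw [MvPowerSeries.coeff_one, if_neg hd'ne, mul_zero]
    · obtain ⟨j, hj⟩ : ∃ j, k + i = j + 1 := ⟨k + i - 1, by omega⟩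
      rw [hj, ih (sz d') (by omega) d' rfl j, ← hj]
      rw [cc, if_neg (by omega), mul_zero]

end
end ESeriesAux

/-- Let `E(t)` be the unique formal power series in the variables
`t₀, t₁, …` (here `tᵢ = Xᵢ` in `MvPowerSeries ℕ ℚ`) with zero constant term solving the
genus-zero Euler–Lagrange equation `B_t(E) = 0`, i.e. `E = ∑_{i≥0} (tᵢ/i!) Eⁱ`
(stated coefficientwise; the cutoff `|d| + 1` is harmless since `[monomial d](Xᵢ·Eⁱ) = 0`
for `i` beyond it).  Then
`E(t) = ∑_{n≥1} (1/n) ∑_{i₁+⋯+iₙ = n−1} (t_{i₁}/i₁!) ⋯ (t_{iₙ}/iₙ!)`,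
equivalently, the coefficient of the monomial `∏ tᵢ^{dᵢ}` equals
`(n−1)! / ∏ᵢ (dᵢ! · (i!)^{dᵢ})` if `∑ i·dᵢ + 1 = n := ∑ dᵢ`, and `0` otherwise. -/
theorem E_series_explicit_formula
    (E : MvPowerSeries ℕ ℚ)
    (hE0 : MvPowerSeries.constantCoeff E = 0)
    (hEeq : ∀ d : ℕ →₀ ℕ,
      MvPowerSeries.coeff d E =
        ∑ i ∈ Finset.range ((d.sum fun _ m => m) + 1),
          (i.factorial : ℚ)⁻¹ * MvPowerSeries.coeff d (MvPowerSeries.X i * E ^ i)) :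
    ∀ d : ℕ →₀ ℕ,
      MvPowerSeries.coeff d E =
        if (d.sum fun i m => i * m) + 1 = d.sum fun _ m => m then
          (((d.sum fun _ m => m) - 1).factorial : ℚ) /
            ((d.prod fun i m => m.factorial * i.factorial ^ m : ℕ) : ℚ)
        else 0 := by
  intro d
  have h1 := ESeriesAux.main E hE0 hEeq (ESeriesAux.sz d) d rfl 0
  rw [pow_one] at h1
  rw [h1, ESeriesAux.cc]
  norm_num
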